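/- Let N ≥ 1 and σ > 0. Let C₁ ⊆ ℝ × ℝ^N be nonempty and compact, let L ⊆ ℝ × ℝ^N be nonempty and closed, set ē := e(C₁, L), and assume ē > 0. Let p̄₁ ∈ C₁ and p̄₂ ∈ L satisfy ‖p̄₁ − p̄₂‖_σ = ē. Fix δ ∈ (0, ē] and define f(p, q) := d^σ_{C₁}(p) + d^σ_L(q) + ‖p − q‖²_σ / (2δ) for p, q ∈ ℝ × ℝ^N. Then f(p, q) ≥ ē − δ/2 for all p, q ∈ ℝ × ℝ^N, and equality holds at q̄₁ := ½(1 + δ/ē) p̄₁ + ½(1 − δ/ē) p̄₂ and q̄₂ := ½(1 − δ/ē) p̄₁ + ½(1 + δ/ē) p̄₂. In particular f attains its global minimum, equal to ē − δ/2, at the pair (q̄₁, q̄₂). -/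

import Mathlib

open Metric Set

/-- The norm `‖(t,x)‖_σ = sqrt(t²/σ² + ‖x‖²)` on `ℝ × ℝ^N`. -/
noncomputable def snormS {N : ℕ} (σ : ℝ) (p : ℝ × EuclideanSpace ℝ (Fin N)) : ℝ :=
  Real.sqrt (p.1 ^ 2 / σ ^ 2 + ‖p.2‖ ^ 2)

/-- The distance function `d^σ_E(p) = inf {‖q - p‖_σ : q ∈ E}`. -/
noncomputable def distS {N : ℕ} (σ : ℝ) (E : Set (ℝ × EuclideanSpace ℝ (Fin N)))
    (p : ℝ × EuclideanSpace ℝ (Fin N)) : ℝ :=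
  sInf {r | ∃ q ∈ E, r = snormS σ (q - p)}

/-- The minimal distance `e(A,B) = inf {‖p - q‖_σ : p ∈ A, q ∈ B}`. -/
noncomputable def eS {N : ℕ} (σ : ℝ) (A B : Set (ℝ × EuclideanSpace ℝ (Fin N))) : ℝ :=
  sInf {r | ∃ p ∈ A, ∃ q ∈ B, r = snormS σ (p - q)}

section Aux

variable {N : ℕ} {σ : ℝ}

lemma snormS_nonneg (p : ℝ × EuclideanSpace ℝ (Fin N)) : 0 ≤ snormS σ p :=
  Real.sqrt_nonneg _

lemma snormS_eq (p : ℝ × EuclideanSpace ℝ (Fin N)) :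
    snormS σ p = ‖(WithLp.equiv 2 _).symm ((p.1 / σ, p.2) : ℝ × EuclideanSpace ℝ (Fin N))‖ := by
  rw [WithLp.prod_norm_eq_of_L2]
  simp [snormS, Real.norm_eq_abs, sq_abs, div_pow]

lemma snormS_add_le (p q : ℝ × EuclideanSpace ℝ (Fin N)) :
    snormS σ (p + q) ≤ snormS σ p + snormS σ q := by
  rw [snormS_eq, snormS_eq, snormS_eq]
  have h : (WithLp.equiv 2 _).symm (((p + q).1 / σ, (p + q).2) : ℝ × EuclideanSpace ℝ (Fin N)) =
      (WithLp.equiv 2 (ℝ × EuclideanSpace ℝ (Fin N))).symm (p.1 / σ, p.2) +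
      (WithLp.equiv 2 (ℝ × EuclideanSpace ℝ (Fin N))).symm (q.1 / σ, q.2) := by
    apply (WithLp.equiv 2 _).injective
    simp [Prod.ext_iff, add_div]
  rw [h]
  exact norm_add_le _ _

lemma snormS_smul (c : ℝ) (p : ℝ × EuclideanSpace ℝ (Fin N)) :
    snormS σ (c • p) = |c| * snormS σ p := by
  simp only [snormS, Prod.smul_fst, Prod.smul_snd, smul_eq_mul, norm_smul, Real.norm_eq_abs]
  have h : (c * p.1) ^ 2 / σ ^ 2 + (|c| * ‖p.2‖) ^ 2
      = c ^ 2 * (p.1 ^ 2 / σ ^ 2 + ‖p.2‖ ^ 2) := by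
    rw [mul_pow, mul_pow, sq_abs]; ring
  rw [h, Real.sqrt_mul (sq_nonneg c), Real.sqrt_sq_eq_abs]

lemma snormS_neg (p : ℝ × EuclideanSpace ℝ (Fin N)) : snormS σ (-p) = snormS σ p := by
  have := snormS_smul (σ := σ) (-1) p
  simpa using this

lemma distS_bddBelow (E : Set (ℝ × EuclideanSpace ℝ (Fin N)))
    (p : ℝ × EuclideanSpace ℝ (Fin N)) :
    BddBelow {r | ∃ q ∈ E, r = snormS σ (q - p)} := by
  refine ⟨0, ?_⟩
  rintro r ⟨q, -, rfl⟩
  exact snormS_nonneg _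

lemma distS_le {E : Set (ℝ × EuclideanSpace ℝ (Fin N))}
    {q : ℝ × EuclideanSpace ℝ (Fin N)} (hq : q ∈ E) (p : ℝ × EuclideanSpace ℝ (Fin N)) :
    distS σ E p ≤ snormS σ (q - p) :=
  csInf_le (distS_bddBelow E p) ⟨q, hq, rfl⟩

lemma le_distS {E : Set (ℝ × EuclideanSpace ℝ (Fin N))} (hE : E.Nonempty)
    {p : ℝ × EuclideanSpace ℝ (Fin N)} {c : ℝ}
    (h : ∀ q ∈ E, c ≤ snormS σ (q - p)) : c ≤ distS σ E p := by
  obtain ⟨q0, hq0⟩ := hE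
  refine le_csInf ⟨_, q0, hq0, rfl⟩ ?_
  rintro r ⟨q, hq, rfl⟩
  exact h q hq

lemma eS_le {A B : Set (ℝ × EuclideanSpace ℝ (Fin N))}
    {a b : ℝ × EuclideanSpace ℝ (Fin N)} (ha : a ∈ A) (hb : b ∈ B) :
    eS σ A B ≤ snormS σ (a - b) := by
  refine csInf_le ⟨0, ?_⟩ ⟨a, ha, b, hb, rfl⟩
  rintro r ⟨x, -, y, -, rfl⟩
  exact snormS_nonneg _

end Aux

theorem stmt6 (N : ℕ) (hN : 1 ≤ N) (σ : ℝ) (hσ : 0 < σ)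
    (C₁ L : Set (ℝ × EuclideanSpace ℝ (Fin N)))
    (hC₁ne : C₁.Nonempty) (hC₁cp : IsCompact C₁) (hLne : L.Nonempty) (hLcl : IsClosed L)
    (ebar : ℝ) (hebar : ebar = eS σ C₁ L) (hepos : 0 < ebar)
    (p₁ p₂ : ℝ × EuclideanSpace ℝ (Fin N)) (hp₁ : p₁ ∈ C₁) (hp₂ : p₂ ∈ L)
    (hdist : snormS σ (p₁ - p₂) = ebar)
    (δ : ℝ) (hδ : 0 < δ) (hδe : δ ≤ ebar)
    (f : (ℝ × EuclideanSpace ℝ (Fin N)) → (ℝ × EuclideanSpace ℝ (Fin N)) → ℝ)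
    (hf : f = fun p q => distS σ C₁ p + distS σ L q + snormS σ (p - q) ^ 2 / (2 * δ)) :
    (∀ p q, ebar - δ / 2 ≤ f p q) ∧
    f (((1 + δ / ebar) / 2) • p₁ + ((1 - δ / ebar) / 2) • p₂)
      (((1 - δ / ebar) / 2) • p₁ + ((1 + δ / ebar) / 2) • p₂) = ebar - δ / 2 := by
  have hebar' : 0 < δ / ebar := div_pos hδ hepos
  have hde1 : δ / ebar ≤ 1 := (div_le_one hepos).2 hδe
  constructor
  · intro p q
    rw [hf]
    simp only
    set s := snormS σ (p - q) with hs
    have hsnn : 0 ≤ s := snormS_nonneg _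
    have key : ebar - s ≤ distS σ C₁ p + distS σ L q := by
      have h1 : ebar - s - distS σ L q ≤ distS σ C₁ p := by
        apply le_distS hC₁ne
        intro a ha
        have h2 : ebar - s - snormS σ (a - p) ≤ distS σ L q := by
          apply le_distS hLne
          intro b hb
          have he : ebar ≤ snormS σ (a - b) := hebar ▸ eS_le ha hb
          have e1 : a - b = (a - p) + (p - q) + -(b - q) := by abel
          have tri : snormS σ (a - b) ≤ snormS σ (a - p) + s + snormS σ (b - q) := by
            rw [e1]
            calc snormS σ ((a - p) + (p - q) + -(b - q))
                ≤ snormS σ ((a - p) + (p - q)) + snormS σ (-(b - q)) := snormS_add_le _ _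
              _ ≤ snormS σ (a - p) + snormS σ (p - q) + snormS σ (b - q) := by
                  rw [snormS_neg]
                  exact add_le_add_left (snormS_add_le _ _) _
              _ = snormS σ (a - p) + s + snormS σ (b - q) := by rw [hs]
          linarith
        linarith
      linarith
    have hu : s ^ 2 / (2 * δ) * (2 * δ) = s ^ 2 :=
      div_mul_cancel₀ _ (by positivity)
    nlinarith [sq_nonneg (s - δ), hδ, key]
  · set q₁ := ((1 + δ / ebar) / 2) • p₁ + ((1 - δ / ebar) / 2) • p₂ with hq₁
    set q₂ := ((1 - δ / ebar) / 2) • p₁ + ((1 + δ / ebar) / 2) • p₂ with hq₂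
    have ha0 : (0:ℝ) ≤ (1 + δ / ebar) / 2 := by linarith
    have hb0 : (0:ℝ) ≤ (1 - δ / ebar) / 2 := by linarith
    have e1 : p₁ - q₁ = ((1 - δ / ebar) / 2) • (p₁ - p₂) := by
      rw [hq₁]; module
    have e2 : q₁ - p₂ = ((1 + δ / ebar) / 2) • (p₁ - p₂) := by
      rw [hq₁]; module
    have e3 : q₂ - p₂ = ((1 - δ / ebar) / 2) • (p₁ - p₂) := by
      rw [hq₂]; module
    have e4 : p₁ - q₂ = ((1 + δ / ebar) / 2) • (p₁ - p₂) := by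
      rw [hq₂]; module
    have e5 : q₁ - q₂ = (δ / ebar) • (p₁ - p₂) := by
      rw [hq₁, hq₂]; module
    have hbe : (1 - δ / ebar) / 2 * ebar = (ebar - δ) / 2 := by
      field_simp
    have hae : (1 + δ / ebar) / 2 * ebar = (ebar + δ) / 2 := by
      field_simp
    have n1 : snormS σ (p₁ - q₁) = (ebar - δ) / 2 := by
      rw [e1, snormS_smul, abs_of_nonneg hb0, hdist, hbe]
    have n2 : snormS σ (q₁ - p₂) = (ebar + δ) / 2 := by
      rw [e2, snormS_smul, abs_of_nonneg ha0, hdist, hae]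
    have n3 : snormS σ (q₂ - p₂) = (ebar - δ) / 2 := by
      rw [e3, snormS_smul, abs_of_nonneg hb0, hdist, hbe]
    have n4 : snormS σ (p₁ - q₂) = (ebar + δ) / 2 := by
      rw [e4, snormS_smul, abs_of_nonneg ha0, hdist, hae]
    have n5 : snormS σ (q₁ - q₂) = δ := by
      rw [e5, snormS_smul, abs_of_nonneg hebar'.le, hdist]
      field_simp
    have dC : distS σ C₁ q₁ = (ebar - δ) / 2 := by
      apply le_antisymm
      · calc distS σ C₁ q₁ ≤ snormS σ (p₁ - q₁) := distS_le hp₁ _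
          _ = (ebar - δ) / 2 := n1
      · apply le_distS hC₁ne
        intro a ha
        have he : ebar ≤ snormS σ (a - p₂) := hebar ▸ eS_le ha hp₂
        have tri : snormS σ (a - p₂) ≤ snormS σ (a - q₁) + (ebar + δ) / 2 := by
          have : a - p₂ = (a - q₁) + (q₁ - p₂) := by abel
          rw [this, ← n2]
          exact snormS_add_le _ _
        linarith
    have dL : distS σ L q₂ = (ebar - δ) / 2 := by
      apply le_antisymm
      · have : snormS σ (p₂ - q₂) = (ebar - δ) / 2 := by
          rw [show p₂ - q₂ = -(q₂ - p₂) by abel, snormS_neg, n3]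
        calc distS σ L q₂ ≤ snormS σ (p₂ - q₂) := distS_le hp₂ _
          _ = (ebar - δ) / 2 := this
      · apply le_distS hLne
        intro b hb
        have he : ebar ≤ snormS σ (p₁ - b) := hebar ▸ eS_le hp₁ hb
        have tri : snormS σ (p₁ - b) ≤ (ebar + δ) / 2 + snormS σ (b - q₂) := by
          have : p₁ - b = (p₁ - q₂) + -(b - q₂) := by abel
          rw [this]
          calc snormS σ ((p₁ - q₂) + -(b - q₂))
              ≤ snormS σ (p₁ - q₂) + snormS σ (-(b - q₂)) := snormS_add_le _ _
            _ = (ebar + δ) / 2 + snormS σ (b - q₂) := by rw [snormS_neg, n4]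
        linarith
    rw [hf]
    simp only
    rw [dC, dL, n5]
    field_simp
    ring
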